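/- Let V₁ be a finite-dimensional real vector space, g ⊆ gl(V₁) a Lie subalgebra acting faithfully, with g acting diagonally on V₁ ⊕ V₁. If R : (V₁⊕V₁)² → g is an alternating bilinear map satisfying the first Bianchi identity (with elements of g acting diagonally), then R vanishes on the first summand and on the second summand: R((x,0),(y,0)) = 0 and R((0,x),(0,y)) = 0 for all x,y ∈ V₁. -/

import Mathlib

attribute [local instance 100] LieRing.ofAssociativeRing

theorem stmt_7 (V₁ : Type*) [AddCommGroup V₁] [Module ℝ V₁] [FiniteDimensional ℝ V₁]
    (g : LieSubalgebra ℝ (Module.End ℝ V₁))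
    (R : (V₁ × V₁) →ₗ[ℝ] (V₁ × V₁) →ₗ[ℝ] Module.End ℝ V₁)
    (hval : ∀ a b, R a b ∈ g)
    (halt : ∀ a b, R a b = - R b a)
    (hBianchi : ∀ a b c : V₁ × V₁,
      ((R a b c.1, R a b c.2) : V₁ × V₁) + (R b c a.1, R b c a.2)
        + (R c a b.1, R c a b.2) = 0) :
    (∀ x y : V₁, R (x, 0) (y, 0) = 0) ∧ (∀ x y : V₁, R (0, x) (0, y) = 0) := by
  constructor
  · intro x y
    ext z
    have h := congrArg Prod.snd (hBianchi (x, 0) (y, 0) (0, z))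
    simpa using h
  · intro x y
    ext z
    have h := congrArg Prod.fst (hBianchi (0, x) (0, y) (z, 0))
    simpa using h
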